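/- Let (X, μ) be a measure space, let Φ : ℝ → ℝ be nondecreasing, and let h₁, h₂, z₁, z₂ : X → ℝ be measurable functions with h₁ ≤ h₂ μ-a.e. Assume that the functions h₁·(Φ∘z₁), h₂·(Φ∘z₂), h₁·(Φ∘min(z₁,z₂)) and h₂·(Φ∘max(z₁,z₂)) are all μ-integrable. Then ∫_X ( h₁(x) Φ(z₁(x)) + h₂(x) Φ(z₂(x)) ) dμ(x) ≤ ∫_X ( h₁(x) Φ(min(z₁(x),z₂(x))) + h₂(x) Φ(max(z₁(x),z₂(x))) ) dμ(x). -/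
import Mathlib

open MeasureTheory

/-- **Rearrangement inequality (3.3).** For a nondecreasing `Φ : ℝ → ℝ` and measurable
functions `h₁ ≤ h₂` a.e., with all four products integrable,
`∫ (h₁ Φ(z₁) + h₂ Φ(z₂)) ≤ ∫ (h₁ Φ(min z₁ z₂) + h₂ Φ(max z₁ z₂))`. -/
theorem stmt_0 {X : Type*} [MeasurableSpace X] (μ : Measure X)
    (Φ : ℝ → ℝ) (hΦ : Monotone Φ)
    (h₁ h₂ z₁ z₂ : X → ℝ)
    (hh₁ : Measurable h₁) (hh₂ : Measurable h₂)
    (hz₁ : Measurable z₁) (hz₂ : Measurable z₂)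
    (hle : ∀ᵐ x ∂μ, h₁ x ≤ h₂ x)
    (i₁ : Integrable (fun x => h₁ x * Φ (z₁ x)) μ)
    (i₂ : Integrable (fun x => h₂ x * Φ (z₂ x)) μ)
    (i₃ : Integrable (fun x => h₁ x * Φ (min (z₁ x) (z₂ x))) μ)
    (i₄ : Integrable (fun x => h₂ x * Φ (max (z₁ x) (z₂ x))) μ) :
    ∫ x, (h₁ x * Φ (z₁ x) + h₂ x * Φ (z₂ x)) ∂μ ≤
      ∫ x, (h₁ x * Φ (min (z₁ x) (z₂ x)) + h₂ x * Φ (max (z₁ x) (z₂ x))) ∂μ := by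
  refine integral_mono_ae (i₁.add i₂) (i₃.add i₄) ?_
  filter_upwards [hle] with x hx
  rcases le_total (z₁ x) (z₂ x) with h | h
  · simp [min_eq_left h, max_eq_right h]
  · rw [min_eq_right h, max_eq_left h]
    nlinarith [hΦ h, sub_nonneg.mpr hx, mul_nonneg (sub_nonneg.mpr hx) (sub_nonneg.mpr (hΦ h))]
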